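/- For a connected graph Γ on N ≥ 2 vertices, viewed as an oriented hypergraph where every edge has one input and one output, the lower bound λ_N ≥ η(Γ̂) applied to the star Γ̂ of edges incident to any fixed vertex v yields λ_N ≥ 1 + Σ_{w∼v} 1/(deg(w)·deg(v)) ≥ N/(N-1). In particular, λ_N ≥ N/(N-1). -/

import Mathlib

open Finset

/-- For a connected graph on `N ≥ 2` vertices, applying the lower bound
`λ_N ≥ η(Γ̂)` to the star of edges at a vertex `v` gives
`λ_N ≥ 1 + ∑_{w∼v} 1/(deg w · deg v) ≥ N/(N-1)`; in particular `λ_N ≥ N/(N-1)`. -/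
theorem graph_lower_bound {N : ℕ} (hN : 2 ≤ N) (G : SimpleGraph (Fin N))
    [DecidableRel G.Adj] (hconn : G.Connected) (v : Fin N)
    (lam : ℝ)
    (hlam : IsGreatest {r : ℝ | ∃ f : Fin N → ℝ, f ≠ 0 ∧
      r = ((∑ a, ∑ b, if G.Adj a b then (f a - f b) ^ 2 else 0) / 2) /
          (∑ a, (G.degree a : ℝ) * f a ^ 2)} lam) :
    (1 + ∑ w ∈ G.neighborFinset v, 1 / ((G.degree w : ℝ) * (G.degree v : ℝ)) ≤ lam) ∧
    ((N : ℝ) / (N - 1) ≤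
      1 + ∑ w ∈ G.neighborFinset v, 1 / ((G.degree w : ℝ) * (G.degree v : ℝ))) ∧
    (N : ℝ) / (N - 1) ≤ lam := by
  classical
  -- basic degree facts
  have hdvn : 0 < G.degree v := by
    rw [G.degree_pos_iff_exists_adj]
    have : Nontrivial (Fin N) := Fin.nontrivial_iff_two_le.mpr hN
    obtain ⟨u, hu⟩ := exists_ne v
    obtain ⟨p⟩ := hconn.preconnected v u
    exact ⟨p.getVert 1, p.adj_snd (SimpleGraph.Walk.not_nil_of_ne (Ne.symm hu))⟩
  set dv : ℝ := (G.degree v : ℝ) with hdvdef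
  have hdv : 0 < dv := by rw [hdvdef]; exact_mod_cast hdvn
  have hdegw : ∀ w ∈ G.neighborFinset v, 0 < (G.degree w : ℝ) := by
    intro w hw
    rw [SimpleGraph.mem_neighborFinset] at hw
    exact_mod_cast (G.degree_pos_iff_exists_adj w).mpr ⟨v, hw.symm⟩
  set S1 : ℝ := ∑ w ∈ G.neighborFinset v, 1 / (G.degree w : ℝ) with hS1def
  have hS1nn : 0 ≤ S1 := Finset.sum_nonneg fun w hw => by positivity
  set Q : ℝ := ∑ w ∈ G.neighborFinset v, (1 / (G.degree w : ℝ)) ^ 2 with hQdef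
  -- the sum in the statement equals S1 / dv
  have hsum_eq : ∑ w ∈ G.neighborFinset v, 1 / ((G.degree w : ℝ) * dv) = S1 / dv := by
    rw [hS1def, Finset.sum_div]
    refine Finset.sum_congr rfl fun w _ => ?_
    rw [div_div]
  -- test function
  set f : Fin N → ℝ := fun u =>
    if u = v then 1 else if G.Adj v u then -(1 / (G.degree u : ℝ)) else 0 with hfdef
  have hfv : f v = 1 := by simp [hfdef]
  have hfne : f ≠ 0 := by
    intro h
    have := congrFun h v
    rw [hfv] at this
    simp at this
  have hfw : ∀ w ∈ G.neighborFinset v, f w = -(1 / (G.degree w : ℝ)) := by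
    intro w hw
    rw [SimpleGraph.mem_neighborFinset] at hw
    simp [hfdef, hw.ne', hw]
  -- denominator
  have hD : ∑ a, (G.degree a : ℝ) * f a ^ 2 = dv + S1 := by
    rw [← Finset.sum_erase_add _ _ (Finset.mem_univ v), hfv]
    have h1 : ∑ a ∈ Finset.univ.erase v, (G.degree a : ℝ) * f a ^ 2
        = ∑ a, (if G.Adj v a then 1 / (G.degree a : ℝ) else 0) := by
      rw [← Finset.sum_erase Finset.univ
        (f := fun a => if G.Adj v a then 1 / (G.degree a : ℝ) else 0) (a := v) (by simp)]
      refine Finset.sum_congr rfl fun a ha => ?_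
      have hav : a ≠ v := Finset.ne_of_mem_erase ha
      by_cases h : G.Adj v a
      · have hda : (0:ℝ) < (G.degree a : ℝ) :=
          hdegw a (by rwa [SimpleGraph.mem_neighborFinset])
        simp only [hfdef, hav, if_false, h, if_true]
        field_simp
      · simp [hfdef, hav, h]
    rw [h1, ← Finset.sum_filter, ← SimpleGraph.neighborFinset_eq_filter, ← hS1def]
    ring
  have hDpos : 0 < ∑ a, (G.degree a : ℝ) * f a ^ 2 := by rw [hD]; linarith
  -- numerator lower bound
  set F : Fin N → Fin N → ℝ := fun a b => if G.Adj a b then (f a - f b) ^ 2 else 0 with hFdef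
  have hFnn : ∀ a b, 0 ≤ F a b := by
    intro a b; simp only [hFdef]; split <;> positivity
  have hFsymm : ∀ a b, F a b = F b a := by
    intro a b; simp only [hFdef, G.adj_comm a b]
    split <;> ring_nf
  have hrow : ∑ b, F v b = ∑ w ∈ G.neighborFinset v, (1 + 1 / (G.degree w : ℝ)) ^ 2 := by
    rw [hFdef]
    simp only
    rw [← Finset.sum_filter, ← SimpleGraph.neighborFinset_eq_filter]
    refine Finset.sum_congr rfl fun w hw => ?_
    rw [hfv, hfw w hw]; ring
  have hkey : 2 * (∑ b, F v b) ≤ ∑ a, ∑ b, F a b := by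
    have hsplit : ∑ a, ∑ b, F a b
        = ∑ a ∈ Finset.univ.erase v, (∑ b, F a b) + ∑ b, F v b :=
      (Finset.sum_erase_add _ _ (Finset.mem_univ v)).symm
    have h2 : ∑ a ∈ Finset.univ.erase v, F a v ≤ ∑ a ∈ Finset.univ.erase v, ∑ b, F a b :=
      Finset.sum_le_sum fun a _ =>
        Finset.single_le_sum (fun b _ => hFnn a b) (Finset.mem_univ v)
    have h3 : ∑ a ∈ Finset.univ.erase v, F a v = ∑ b, F v b := by
      rw [Finset.sum_erase _ (by simp [hFdef])]
      exact Finset.sum_congr rfl fun a _ => hFsymm a v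
    linarith [hsplit]
  -- value of S
  have hScard : ((G.neighborFinset v).card : ℝ) = dv := by rw [hdvdef, SimpleGraph.degree]
  have hS : ∑ w ∈ G.neighborFinset v, (1 + 1 / (G.degree w : ℝ)) ^ 2 = dv + 2 * S1 + Q := by
    have : ∀ w ∈ G.neighborFinset v, (1 + 1 / (G.degree w : ℝ)) ^ 2
        = 1 + 2 * (1 / (G.degree w : ℝ)) + (1 / (G.degree w : ℝ)) ^ 2 :=
      fun w _ => by ring
    rw [Finset.sum_congr rfl this, Finset.sum_add_distrib, Finset.sum_add_distrib,
      Finset.sum_const, ← Finset.mul_sum, nsmul_eq_mul, mul_one, hScard, ← hS1def, ← hQdef]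
  -- Cauchy-Schwarz
  have hCS : S1 ^ 2 ≤ dv * Q := by
    rw [hS1def, hQdef, ← hScard]
    exact sq_sum_le_card_mul_sum_sq
  -- main Rayleigh quotient bound
  have hquot : 1 + S1 / dv ≤
      ((∑ a, ∑ b, if G.Adj a b then (f a - f b) ^ 2 else 0) / 2) /
        (∑ a, (G.degree a : ℝ) * f a ^ 2) := by
    have hnum : dv + 2 * S1 + Q ≤ (∑ a, ∑ b, if G.Adj a b then (f a - f b) ^ 2 else 0) / 2 := by
      have : ∑ a, ∑ b, (if G.Adj a b then (f a - f b) ^ 2 else 0) = ∑ a, ∑ b, F a b := rfl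
      rw [this, ← hS, ← hrow]
      linarith [hkey]
    have hfrac : 1 + S1 / dv ≤ (dv + 2 * S1 + Q) / (dv + S1) := by
      have h1 : 1 + S1 / dv = (dv + S1) / dv := by field_simp
      rw [h1, div_le_div_iff₀ hdv (by linarith)]
      nlinarith [hCS]
    calc 1 + S1 / dv ≤ (dv + 2 * S1 + Q) / (dv + S1) := hfrac
      _ ≤ ((∑ a, ∑ b, if G.Adj a b then (f a - f b) ^ 2 else 0) / 2) /
          (∑ a, (G.degree a : ℝ) * f a ^ 2) := by
          rw [hD]
          exact div_le_div_of_nonneg_right hnum (by linarith) |>.trans_eq rfl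
  have goal1 : 1 + ∑ w ∈ G.neighborFinset v, 1 / ((G.degree w : ℝ) * (G.degree v : ℝ)) ≤ lam := by
    rw [hsum_eq]
    exact le_trans hquot (hlam.2 ⟨f, hfne, rfl⟩)
  -- second inequality
  have hN1 : (1:ℝ) ≤ (N:ℝ) - 1 := by
    have : (2:ℝ) ≤ (N:ℝ) := by exact_mod_cast hN
    linarith
  have goal2 : (N : ℝ) / (N - 1) ≤
      1 + ∑ w ∈ G.neighborFinset v, 1 / ((G.degree w : ℝ) * (G.degree v : ℝ)) := by
    have hterm : ∀ w ∈ G.neighborFinset v,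
        1 / (((N:ℝ) - 1) * dv) ≤ 1 / ((G.degree w : ℝ) * dv) := by
      intro w hw
      have hdw : 0 < (G.degree w : ℝ) := hdegw w hw
      have hdwle : (G.degree w : ℝ) ≤ (N:ℝ) - 1 := by
        have h := G.degree_lt_card_verts w
        rw [Fintype.card_fin] at h
        have h2 : G.degree w + 1 ≤ N := h
        have h3 : (G.degree w : ℝ) + 1 ≤ (N:ℝ) := by exact_mod_cast h2
        linarith
      apply one_div_le_one_div_of_le (by positivity)
      exact mul_le_mul_of_nonneg_right hdwle (le_of_lt hdv)
    have hsumge : 1 / ((N:ℝ) - 1) ≤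
        ∑ w ∈ G.neighborFinset v, 1 / ((G.degree w : ℝ) * dv) := by
      calc 1 / ((N:ℝ) - 1) = ((G.neighborFinset v).card : ℝ) * (1 / (((N:ℝ) - 1) * dv)) := by
            rw [hScard]; field_simp
        _ = ∑ _w ∈ G.neighborFinset v, 1 / (((N:ℝ) - 1) * dv) := by
            rw [Finset.sum_const, nsmul_eq_mul]
        _ ≤ _ := Finset.sum_le_sum hterm
    have : (N:ℝ) / ((N:ℝ) - 1) = 1 + 1 / ((N:ℝ) - 1) := by
      field_simp
      ring
    rw [this]
    linarith [hsumge]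
  exact ⟨goal1, goal2, le_trans goal2 goal1⟩
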